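/- Let f : ℝ^d → ℝ be L-smooth and C ∈ B³(δ). Then for any x and 0 ≤ η ≤ 1/L, E[f(x − ηC(∇f(x)))] ≤ f(x) − (η/(2δ))‖∇f(x)‖². -/

import Mathlib

open MeasureTheory

/-- One step of compressed gradient descent with `C ∈ B³(δ)`: if `f` is
`L`-smooth with gradient `f'`, then for `0 ≤ η ≤ 1/L`,
`E[f(x − ηC(∇f(x)))] ≤ f(x) − (η/(2δ))‖∇f(x)‖²`. -/
theorem stmt17 {d : ℕ} {Ω : Type*} [MeasurableSpace Ω]
    (μ : Measure Ω) [IsProbabilityMeasure μ]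
    (f : EuclideanSpace ℝ (Fin d) → ℝ) (f' : EuclideanSpace ℝ (Fin d) → EuclideanSpace ℝ (Fin d))
    (L : ℝ) (hL : 0 < L)
    (hsmooth : ∀ x y, f y ≤ f x + (inner ℝ (f' x) (y - x) : ℝ) + L / 2 * ‖y - x‖ ^ 2)
    (C : EuclideanSpace ℝ (Fin d) → Ω → EuclideanSpace ℝ (Fin d))
    (δ : ℝ) (hδ : 0 < δ)
    (hintC : ∀ g, Integrable (C g) μ)
    (hintC2 : ∀ g, Integrable (fun ω => ‖C g ω‖ ^ 2) μ)
    (hB : ∀ g, ∫ ω, ‖C g ω - g‖ ^ 2 ∂μ ≤ (1 - 1 / δ) * ‖g‖ ^ 2)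
    (η : ℝ) (hη0 : 0 ≤ η) (hη : η ≤ 1 / L) (x : EuclideanSpace ℝ (Fin d))
    (hintf : Integrable (fun ω => f (x - η • C (f' x) ω)) μ) :
    ∫ ω, f (x - η • C (f' x) ω) ∂μ ≤ f x - (η / (2 * δ)) * ‖f' x‖ ^ 2 := by

  set g := f' x with hg
  have hc := hintC g
  have hc2 := hintC2 g
  have hinner : Integrable (fun ω => (inner ℝ g (C g ω) : ℝ)) μ := hc.const_inner g
  have hdiff : (fun ω => ‖C g ω - g‖ ^ 2)
      = fun ω => ‖C g ω‖ ^ 2 - 2 * (inner ℝ g (C g ω) : ℝ) + ‖g‖ ^ 2 := by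
    funext ω
    have h := norm_sub_sq_real (C g ω) g
    rw [real_inner_comm] at h
    exact h
  have hi1 : Integrable (fun ω => ‖C g ω‖ ^ 2 - 2 * (inner ℝ g (C g ω) : ℝ)) μ :=
    hc2.sub (hinner.const_mul 2)
  have hsub2 : Integrable (fun ω => ‖C g ω - g‖ ^ 2) μ := by
    rw [hdiff]
    exact hi1.add (integrable_const _)
  set A := ∫ ω, ‖C g ω‖ ^ 2 ∂μ with hA
  set B := ∫ ω, ‖C g ω - g‖ ^ 2 ∂μ with hB'
  set I := ∫ ω, (inner ℝ g (C g ω) : ℝ) ∂μ with hI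
  set G := ‖g‖ ^ 2 with hG
  have hBval : B = A - 2 * I + G := by
    rw [hB', hdiff]
    rw [integral_add hi1 (integrable_const _),
      integral_sub hc2 (hinner.const_mul 2), integral_const_mul, integral_const]
    simp [hA, hI, hG]
  have hi2 : Integrable (fun ω => f x - η * (inner ℝ g (C g ω) : ℝ)) μ :=
    (integrable_const _).sub (hinner.const_mul η)
  have hrhsint : Integrable (fun ω => f x - η * (inner ℝ g (C g ω) : ℝ)
      + L / 2 * η ^ 2 * ‖C g ω‖ ^ 2) μ :=
    hi2.add (hc2.const_mul _)
  have hpt : ∀ ω, f (x - η • C g ω) ≤ f x - η * (inner ℝ g (C g ω) : ℝ)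
      + L / 2 * η ^ 2 * ‖C g ω‖ ^ 2 := by
    intro ω
    have h := hsmooth x (x - η • C g ω)
    have h1 : x - η • C g ω - x = -(η • C g ω) := by abel
    rw [h1] at h
    have h2 : (inner ℝ g (-(η • C g ω)) : ℝ) = -(η * (inner ℝ g (C g ω) : ℝ)) := by
      rw [inner_neg_right, real_inner_smul_right]
    have h3 : ‖-(η • C g ω)‖ ^ 2 = η ^ 2 * ‖C g ω‖ ^ 2 := by
      rw [norm_neg, norm_smul]
      simp [mul_pow, abs_of_nonneg hη0]
    rw [h2, h3] at h
    calc f (x - η • C g ω) ≤ f x + -(η * (inner ℝ g (C g ω) : ℝ))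
          + L / 2 * (η ^ 2 * ‖C g ω‖ ^ 2) := h
      _ = f x - η * (inner ℝ g (C g ω) : ℝ) + L / 2 * η ^ 2 * ‖C g ω‖ ^ 2 := by ring
  have hmono : ∫ ω, f (x - η • C g ω) ∂μ
      ≤ ∫ ω, (f x - η * (inner ℝ g (C g ω) : ℝ) + L / 2 * η ^ 2 * ‖C g ω‖ ^ 2) ∂μ :=
    integral_mono hintf hrhsint hpt
  have hrhsval : ∫ ω, (f x - η * (inner ℝ g (C g ω) : ℝ)
      + L / 2 * η ^ 2 * ‖C g ω‖ ^ 2) ∂μ = f x - η * I + L / 2 * η ^ 2 * A := by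
    rw [integral_add hi2 (hc2.const_mul _),
      integral_sub (integrable_const _) (hinner.const_mul η),
      integral_const_mul, integral_const_mul, integral_const]
    simp [hA, hI]
  rw [hrhsval] at hmono
  have hBle : B ≤ (1 - 1 / δ) * G := hB g
  have hA0 : 0 ≤ A := integral_nonneg fun ω => sq_nonneg _
  have hG0 : 0 ≤ G := sq_nonneg _
  have hLη : L * η ≤ 1 := by
    have := (le_div_iff₀ hL).mp hη
    linarith [mul_comm η L]
  have hfinal : f x - η * I + L / 2 * η ^ 2 * A ≤ f x - η / (2 * δ) * G := by
    have hI' : I = (A + G - B) / 2 := by linarith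
    have h1 : η * B ≤ η * ((1 - 1 / δ) * G) := mul_le_mul_of_nonneg_left hBle hη0
    have h2 : 0 ≤ η / 2 * (1 - L * η) * A :=
      mul_nonneg (mul_nonneg (by linarith) (by linarith)) hA0
    have hkey : η / (2 * δ) * G = η * (1 / δ) * G / 2 := by ring
    rw [hI', hkey]
    linarith
  linarith
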